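/- Let A be an n×n real symmetric matrix whose off-diagonal entries are all nonnegative. Suppose φ : [0, ∞) → ℝⁿ solves the linear ODE φ'(t) = A·φ(t), with φ(t) entrywise strictly positive for all t ≥ 0 and sup_{t ≥ 0} |φ(t)| < ∞. Then the largest eigenvalue of A is at most 0. -/

import Mathlib

/-- Finite-dimensional stability lemma: if a symmetric matrix with nonnegative off-diagonal
entries admits a strictly positive, bounded solution of `φ' = Aφ` on `[0,∞)`, then all
eigenvalues of `A` are at most `0`. -/
theorem stmt_10 (n : ℕ) (A : Matrix (Fin n) (Fin n) ℝ) (hA : A.IsSymm)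
    (hoff : ∀ i j, i ≠ j → 0 ≤ A i j)
    (φ : ℝ → (Fin n → ℝ))
    (hode : ∀ t ≥ (0:ℝ), HasDerivAt φ (A.mulVec (φ t)) t)
    (hpos : ∀ t ≥ (0:ℝ), ∀ i, 0 < φ t i)
    (hbdd : ∃ M : ℝ, ∀ t ≥ (0:ℝ), ‖φ t‖ ≤ M) :
    ∀ (μ : ℝ) (v : Fin n → ℝ), v ≠ 0 → A.mulVec v = μ • v → μ ≤ 0 := by
  intro μ v hv hev
  by_contra hμ
  push_neg at hμ
  obtain ⟨M, hM⟩ := hbdd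
  set w : Fin n → ℝ := fun i => |v i| with hw
  -- key pointwise inequality
  have key : ∀ i, μ * w i ≤ ∑ j, A i j * w j := by
    intro i
    have hAv : ∑ j, A i j * v j = μ * v i := by
      have := congrFun hev i
      simpa [Matrix.mulVec, dotProduct, Pi.smul_apply, smul_eq_mul] using this
    rcases le_or_gt 0 (v i) with hvi | hvi
    · have h1 : μ * w i = ∑ j, A i j * v j := by
        rw [hAv, hw]; simp [abs_of_nonneg hvi]
      rw [h1]
      apply Finset.sum_le_sum
      intro j _
      rcases eq_or_ne j i with rfl | hji
      · simp [hw, abs_of_nonneg hvi]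
      · exact mul_le_mul_of_nonneg_left (le_abs_self _) (hoff i j (Ne.symm hji))
    · have h1 : μ * w i = ∑ j, A i j * (-v j) := by
        have h2 : μ * w i = -(∑ j, A i j * v j) := by
          rw [hAv, hw]; simp only [abs_of_neg hvi]; ring
        rw [h2, ← Finset.sum_neg_distrib]
        exact Finset.sum_congr rfl (fun j _ => by ring)
      rw [h1]
      apply Finset.sum_le_sum
      intro j _
      rcases eq_or_ne j i with rfl | hji
      · simp [hw, abs_of_neg hvi]
      · exact mul_le_mul_of_nonneg_left (neg_le_abs _) (hoff i j (Ne.symm hji))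
  have hw_nonneg : ∀ i, 0 ≤ w i := fun i => abs_nonneg _
  set g : ℝ → ℝ := fun t => ∑ i, φ t i * w i with hg
  -- derivative of g
  have hg' : ∀ t ≥ (0:ℝ), HasDerivAt g (∑ i, A.mulVec (φ t) i * w i) t := by
    intro t ht
    apply HasDerivAt.fun_sum
    intro i _
    have hcoord : HasDerivAt (fun s => φ s i) (A.mulVec (φ t) i) t := by
      have := (ContinuousLinearMap.proj (R := ℝ) (φ := fun _ : Fin n => ℝ) i).hasFDerivAt.comp_hasDerivAt t (hode t ht)
      exact hasDerivAt_pi.mp (hode t ht) i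
    exact hcoord.mul_const (w i)
  -- differential inequality
  have hineq : ∀ t ≥ (0:ℝ), μ * g t ≤ ∑ i, A.mulVec (φ t) i * w i := by
    intro t ht
    have swap : ∑ i, A.mulVec (φ t) i * w i = ∑ j, φ t j * (∑ i, A j i * w i) := by
      simp only [Matrix.mulVec, dotProduct, Finset.sum_mul, Finset.mul_sum]
      rw [Finset.sum_comm]
      apply Finset.sum_congr rfl
      intro j _
      apply Finset.sum_congr rfl
      intro i _
      rw [hA.apply i j]; ring
    rw [swap, hg]
    rw [Finset.mul_sum]
    apply Finset.sum_le_sum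
    intro j _
    have hφ := (hpos t ht j).le
    calc μ * (φ t j * w j) = φ t j * (μ * w j) := by ring
      _ ≤ φ t j * ∑ i, A j i * w i := mul_le_mul_of_nonneg_left (key j) hφ
  -- h := exp(-μt) * g is monotone on [0,∞)
  set h : ℝ → ℝ := fun t => Real.exp (-(μ * t)) * g t with hh
  have hh' : ∀ t ≥ (0:ℝ), HasDerivAt h
      (Real.exp (-(μ * t)) * ((∑ i, A.mulVec (φ t) i * w i) - μ * g t)) t := by
    intro t ht
    have he : HasDerivAt (fun s => Real.exp (-(μ * s))) (Real.exp (-(μ * t)) * (-(μ * 1))) t :=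
      (((hasDerivAt_id t).const_mul μ).neg).exp
    have := he.mul (hg' t ht)
    exact this.congr_deriv (by ring)
  have hderiv_nonneg : ∀ t ≥ (0:ℝ),
      0 ≤ Real.exp (-(μ * t)) * ((∑ i, A.mulVec (φ t) i * w i) - μ * g t) := by
    intro t ht
    exact mul_nonneg (Real.exp_nonneg _) (sub_nonneg.mpr (hineq t ht))
  have hmono : MonotoneOn h (Set.Ici 0) := by
    apply monotoneOn_of_deriv_nonneg (convex_Ici 0)
    · intro t ht
      exact (hh' t ht).continuousAt.continuousWithinAt
    · intro t ht
      rw [interior_Ici] at ht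
      exact ((hh' t (le_of_lt ht)).differentiableAt).differentiableWithinAt
    · intro t ht
      rw [interior_Ici] at ht
      rw [(hh' t (le_of_lt ht)).deriv]
      exact hderiv_nonneg t (le_of_lt ht)
  -- g 0 > 0
  obtain ⟨i0, hi0⟩ := Function.ne_iff.mp hv
  have hi0' : v i0 ≠ 0 := by simpa using hi0
  have hg0 : 0 < g 0 := by
    apply Finset.sum_pos'
    · intro i _
      exact mul_nonneg (hpos 0 le_rfl i).le (hw_nonneg i)
    · exact ⟨i0, Finset.mem_univ _, mul_pos (hpos 0 le_rfl i0) (abs_pos.mpr hi0')⟩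
  -- bound on g
  set S : ℝ := ∑ i, w i with hS
  have hS_nonneg : 0 ≤ S := Finset.sum_nonneg (fun i _ => hw_nonneg i)
  have hgbdd : ∀ t ≥ (0:ℝ), g t ≤ M * S := by
    intro t ht
    have hle : g t ≤ ∑ i, M * w i := by
      apply Finset.sum_le_sum
      intro i _
      apply mul_le_mul_of_nonneg_right _ (hw_nonneg i)
      calc φ t i ≤ |φ t i| := le_abs_self _
        _ = ‖φ t i‖ := rfl
        _ ≤ ‖φ t‖ := norm_le_pi_norm (φ t) i
        _ ≤ M := hM t ht
    simpa [hS, Finset.mul_sum] using hle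
  have hM0 : 0 ≤ M := le_trans (norm_nonneg _) (hM 0 le_rfl)
  -- growth estimate
  have hgrow : ∀ t ≥ (0:ℝ), Real.exp (μ * t) * g 0 ≤ g t := by
    intro t ht
    have hm := hmono (Set.self_mem_Ici) ht ht
    have h0 : h 0 = g 0 := by simp [hh]
    rw [h0] at hm
    have hstep : Real.exp (μ * t) * g 0 ≤ Real.exp (μ * t) * (Real.exp (-(μ * t)) * g t) :=
      mul_le_mul_of_nonneg_left hm (Real.exp_nonneg _)
    calc Real.exp (μ * t) * g 0 ≤ Real.exp (μ * t) * (Real.exp (-(μ * t)) * g t) := hstep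
      _ = g t := by rw [← mul_assoc, ← Real.exp_add]; simp
  -- final contradiction at t0
  set t0 : ℝ := M * S / (μ * g 0) with ht0
  have hμg : 0 < μ * g 0 := mul_pos hμ hg0
  have ht0_nonneg : 0 ≤ t0 := div_nonneg (mul_nonneg hM0 hS_nonneg) hμg.le
  have h1 : μ * t0 * g 0 = M * S := by
    rw [ht0]; field_simp
  have h2 : M * S < Real.exp (μ * t0) * g 0 := by
    have hexp : μ * t0 + 1 ≤ Real.exp (μ * t0) := Real.add_one_le_exp _
    calc M * S = μ * t0 * g 0 := h1.symm
      _ < (μ * t0 + 1) * g 0 := by nlinarith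
      _ ≤ Real.exp (μ * t0) * g 0 := mul_le_mul_of_nonneg_right hexp hg0.le
  have := le_trans (hgrow t0 ht0_nonneg) (hgbdd t0 ht0_nonneg)
  linarith
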